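/- arXiv:1501.05225 — 2 statements merged into one kernel-verified Lean document; each statement's English description precedes it below -/
import Mathlib

section
/- FastLSU may be started from any upper bound on the BH index: for every integer s with r_BH ≤ s ≤ m, the sequence defined by r_0 = s and r_{k+1} = #S(r_k·α/m) is nonincreasing, stays at least r_BH, stabilizes after at most m steps, and its stabilized value equals r_BH. -/
open scoped Classical

/-- `#S(t)`: the number of elements of the multiset `C` that are strictly less than `t`. -/
noncomputable def countBelow (C : Multiset ℝ) (t : ℝ) : ℕ :=
  (C.filter (fun p => p < t)).card

/-- The `k`-th smallest element (1-indexed order statistic, with multiplicity) of `D`. -/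
noncomputable def orderStat (D : Multiset ℝ) (k : ℕ) : ℝ :=
  (D.sort (· ≤ ·)).getD (k - 1) 0

/-- The Benjamini–Hochberg index at level `α`:
`max {i ∈ {1,…,m} : p_(i) < i·α/m}`, with value `0` if this set is empty. -/
noncomputable def rBH (α : ℝ) (C : Multiset ℝ) : ℕ :=
  ((Finset.Icc 1 C.card).filter
    (fun i => orderStat C i < (i : ℝ) * α / (C.card : ℝ))).sup id

theorem sortedA (L : List ℝ) (hL : L.Pairwise (· ≤ ·)) (t : ℝ) (k : ℕ) (hk1 : 1 ≤ k)
    (hcnt : k ≤ (L.filter (fun p => decide (p < t))).length) :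
    L.getD (k - 1) 0 < t := by
  by_contra hge
  push_neg at hge
  have hlen : k ≤ L.length := hcnt.trans (L.length_filter_le _)
  have hk : k - 1 < L.length := by omega
  rw [List.getD_eq_getElem L 0 hk] at hge
  have hk' : k - 1 + 1 = k := by omega
  have hdrop : L.drop (k-1) = L[k-1] :: L.drop k := by
    rw [List.drop_eq_getElem_cons hk, hk']
  have hfd : (L.drop (k-1)).filter (fun p => decide (p < t)) = [] := by
    rw [List.filter_eq_nil_iff]
    intro a ha
    rw [hdrop] at ha
    have : t ≤ a := by
      rcases List.mem_cons.mp ha with h | h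
      · exact h ▸ hge
      · have hs : (L.drop (k-1)).Pairwise (· ≤ ·) := hL.drop
        rw [hdrop] at hs
        exact hge.trans (List.rel_of_pairwise_cons hs h)
    simp [not_lt.mpr this]
  have hfinal : k ≤ k - 1 := by
    calc k ≤ (L.filter (fun p => decide (p < t))).length := hcnt
    _ = ((L.take (k-1) ++ L.drop (k-1)).filter (fun p => decide (p < t))).length := by
        rw [L.take_append_drop]
    _ = ((L.take (k-1)).filter _).length + ((L.drop (k-1)).filter _).length := by
        rw [List.filter_append, List.length_append]
    _ ≤ (k-1) + 0 := by
        rw [hfd]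
        simp only [List.length_nil]
        exact Nat.add_le_add (le_trans (List.length_filter_le _ _) (by simp)) le_rfl
  omega

theorem sortedB (L : List ℝ) (hL : L.Pairwise (· ≤ ·)) (t : ℝ) (k : ℕ) (hk1 : 1 ≤ k)
    (hlen : k ≤ L.length) (hlt : L.getD (k - 1) 0 < t) :
    k ≤ (L.filter (fun p => decide (p < t))).length := by
  have hk : k - 1 < L.length := by omega
  rw [List.getD_eq_getElem L 0 hk] at hlt
  have htake : (L.take k).filter (fun p => decide (p < t)) = L.take k := by
    rw [List.filter_eq_self]
    intro a ha
    obtain ⟨i, hi, hia⟩ := List.mem_take_iff_getElem.mp ha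
    have hik : i < k := lt_of_lt_of_le hi (min_le_left _ _)
    have hile : i < L.length := by omega
    have : L[i] ≤ L[k-1] := by
      rcases eq_or_lt_of_le (by omega : i ≤ k - 1) with h | h
      · exact le_of_eq (by congr 1)
      · exact List.pairwise_iff_get.mp hL ⟨i, hile⟩ ⟨k-1, hk⟩ h
    simp only [decide_eq_true_eq]
    rw [← hia]
    exact lt_of_le_of_lt this hlt
  calc k = (L.take k).length := by rw [List.length_take]; omega
    _ = ((L.take k).filter (fun p => decide (p < t))).length := by rw [htake]
    _ ≤ (L.filter (fun p => decide (p < t))).length :=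
        ((List.take_sublist k L).filter _).length_le

theorem countBelow_eq (C : Multiset ℝ) (t : ℝ) :
    countBelow C t = ((C.sort (· ≤ ·)).filter (fun p => decide (p < t))).length := by
  unfold countBelow
  conv_lhs => rw [← C.sort_eq (· ≤ ·)]
  rw [Multiset.filter_coe, Multiset.coe_card]

theorem countBelow_le_card (C : Multiset ℝ) (t : ℝ) : countBelow C t ≤ C.card :=
  Multiset.card_le_card (Multiset.filter_le _ _)

theorem countBelow_mono (C : Multiset ℝ) {a b : ℝ} (h : a ≤ b) :
    countBelow C a ≤ countBelow C b := by
  apply Multiset.card_le_card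
  apply Multiset.monotone_filter_right
  intro p hp
  exact lt_of_lt_of_le hp h

theorem orderStat_lt_of_le_countBelow (C : Multiset ℝ) (t : ℝ) (k : ℕ) (hk1 : 1 ≤ k)
    (h : k ≤ countBelow C t) : orderStat C k < t := by
  rw [countBelow_eq] at h
  exact sortedA _ (C.pairwise_sort _) t k hk1 h

theorem le_countBelow_of_orderStat_lt (C : Multiset ℝ) (t : ℝ) (k : ℕ) (hk1 : 1 ≤ k)
    (hk2 : k ≤ C.card) (h : orderStat C k < t) : k ≤ countBelow C t := by
  rw [countBelow_eq]
  exact sortedB _ (C.pairwise_sort _) t k hk1 (by rwa [Multiset.length_sort]) h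

theorem rBH_le_card (α : ℝ) (C : Multiset ℝ) : rBH α C ≤ C.card := by
  apply Finset.sup_le
  intro i hi
  exact (Finset.mem_Icc.mp (Finset.mem_filter.mp hi).1).2

theorem le_rBH (α : ℝ) (C : Multiset ℝ) {j : ℕ} (h1 : 1 ≤ j) (h2 : j ≤ C.card)
    (h3 : orderStat C j < (j : ℝ) * α / (C.card : ℝ)) : j ≤ rBH α C :=
  Finset.le_sup (f := id) (Finset.mem_filter.mpr ⟨Finset.mem_Icc.mpr ⟨h1, h2⟩, h3⟩)

theorem rBH_spec (α : ℝ) (C : Multiset ℝ) (h : rBH α C ≠ 0) :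
    orderStat C (rBH α C) < ((rBH α C : ℝ)) * α / (C.card : ℝ) ∧ 1 ≤ rBH α C := by
  set S := ((Finset.Icc 1 C.card).filter
    (fun i => orderStat C i < (i : ℝ) * α / (C.card : ℝ))) with hS
  have hne : S.Nonempty := by
    by_contra hemp
    rw [Finset.not_nonempty_iff_eq_empty] at hemp
    apply h
    unfold rBH
    rw [← hS, hemp]
    rfl
  obtain ⟨b, hb, hbe⟩ := Finset.exists_mem_eq_sup S hne id
  have : rBH α C = b := hbe
  rw [this]
  obtain ⟨hb1, hb2⟩ := Finset.mem_filter.mp hb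
  exact ⟨hb2, (Finset.mem_Icc.mp hb1).1⟩

-- division monotonicity helper
theorem myDivLe (a b c : ℝ) (hab : a ≤ b) (hc : 0 ≤ c) : a / c ≤ b / c := by
  rw [div_eq_mul_inv, div_eq_mul_inv]
  exact mul_le_mul_of_nonneg_right hab (inv_nonneg.mpr hc)

theorem rBH_le_countBelow (α : ℝ) (hα0 : 0 < α) (C : Multiset ℝ) {i : ℕ}
    (hi : rBH α C ≤ i) :
    rBH α C ≤ countBelow C ((i : ℝ) * α / (C.card : ℝ)) := by
  rcases Nat.eq_zero_or_pos (rBH α C) with h0 | hpos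
  · omega
  · have hspec := rBH_spec α C (by omega)
    have h1 : rBH α C ≤ countBelow C ((rBH α C : ℝ) * α / (C.card : ℝ)) :=
      le_countBelow_of_orderStat_lt C _ _ hspec.2 (rBH_le_card α C) hspec.1
    refine h1.trans (countBelow_mono C ?_)
    apply myDivLe _ _ _ _ (Nat.cast_nonneg _)
    exact mul_le_mul_of_nonneg_right (Nat.cast_le.mpr hi) hα0.le

theorem countBelow_le_of_rBH_le (α : ℝ) (hα0 : 0 < α) (C : Multiset ℝ) {i : ℕ}
    (hi : rBH α C ≤ i) :
    countBelow C ((i : ℝ) * α / (C.card : ℝ)) ≤ i := by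
  by_contra hgt
  push_neg at hgt
  have hcnt : i + 1 ≤ countBelow C ((i : ℝ) * α / (C.card : ℝ)) := hgt
  have hle : i + 1 ≤ C.card := hcnt.trans (countBelow_le_card _ _)
  have hord : orderStat C (i+1) < (i : ℝ) * α / (C.card : ℝ) :=
    orderStat_lt_of_le_countBelow C _ _ (by omega) hcnt
  have hord' : orderStat C (i+1) < ((i+1 : ℕ) : ℝ) * α / (C.card : ℝ) := by
    refine hord.trans_le ?_
    apply myDivLe _ _ _ _ (Nat.cast_nonneg _)
    apply mul_le_mul_of_nonneg_right _ hα0.le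
    push_cast; linarith
  have := le_rBH α C (by omega) hle hord'
  omega

/-- FastLSU may be started from any upper bound on the BH index: for every
integer `s` with `r_BH ≤ s ≤ m`, the sequence defined by `r 0 = s` and
`r (k+1) = #S(r k · α/m)` is nonincreasing, stays at least `r_BH`, stabilizes after at
most `m` steps, and its stabilized value equals `r_BH`. -/
theorem fastLSU_from_upper_bound
    (α : ℝ) (hα0 : 0 < α) (hα1 : α < 1)
    (C : Multiset ℝ) (hC : ∀ p ∈ C, 0 ≤ p ∧ p ≤ 1)
    (m : ℕ) (hm : m = C.card)
    (s : ℕ) (hs1 : rBH α C ≤ s) (hs2 : s ≤ m)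
    (r : ℕ → ℕ) (hr0 : r 0 = s)
    (hr : ∀ k, r (k + 1) = countBelow C ((r k : ℝ) * α / (m : ℝ))) :
    (∀ k, r (k + 1) ≤ r k) ∧
    (∀ k, rBH α C ≤ r k) ∧
    (∃ k ≤ m, r k = r (k + 1)) ∧
    (∀ k, r k = r (k + 1) → r k = rBH α C) := by
  subst hm
  have hinv : ∀ k, rBH α C ≤ r k ∧ r k ≤ C.card := by
    intro k
    induction k with
    | zero => rw [hr0]; exact ⟨hs1, hs2⟩
    | succ n ih =>
      rw [hr n]
      exact ⟨rBH_le_countBelow α hα0 C ih.1, countBelow_le_card _ _⟩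
  have hdec : ∀ k, r (k + 1) ≤ r k := by
    intro k
    rw [hr k]
    exact countBelow_le_of_rBH_le α hα0 C (hinv k).1
  refine ⟨hdec, fun k => (hinv k).1, ?_, ?_⟩
  · by_contra hne
    push_neg at hne
    have hstep : ∀ k ≤ C.card, r (k+1) + 1 ≤ r k := by
      intro k hk
      have := hne k hk
      have := hdec k
      omega
    have key : ∀ k, k ≤ C.card + 1 → r k + k ≤ s := by
      intro k
      induction k with
      | zero => intro _; omega
      | succ n ih =>
        intro hn
        have h1 := hstep n (by omega)
        have h2 := ih (by omega)
        omega
    have := key (C.card + 1) le_rfl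
    omega
  · intro k hfix
    have hle : rBH α C ≤ r k := (hinv k).1
    rcases Nat.eq_zero_or_pos (r k) with h0 | hpos
    · omega
    · have hcnt : r k ≤ countBelow C ((r k : ℝ) * α / (C.card : ℝ)) := by
        rw [← hr k]; exact hfix.le
      have hord : orderStat C (r k) < (r k : ℝ) * α / (C.card : ℝ) :=
        orderStat_lt_of_le_countBelow C _ _ hpos hcnt
      have := le_rBH α C hpos (hinv k).2 hord
      omega
end

section
/- Every globally BH-rejected p-value is selected by its chunk: with r_C the global BH index and r*_{C_i} the chunk-level index of chunk C_i, every p ∈ C_i with p < r_C·α/m also satisfies p < (r*_{C_i} + m − m_i)·α/m; hence the global BH rejection set is contained in the union over chunks of the chunk-selected sets {p ∈ C_i : p < (r*_{C_i} + m − m_i)·α/m}. -/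
open scoped Classical

/-- The chunk-level BH index of the chunk `D` inside a total problem of `m` p-values:
`max {r ∈ {1,…,|D|} : p_(r:D) < (r + m − |D|)·α/m}`, with value `0` if this set is empty. -/
noncomputable def rStarChunk (α : ℝ) (m : ℕ) (D : Multiset ℝ) : ℕ :=
  ((Finset.Icc 1 D.card).filter
    (fun r => orderStat D r < ((r + m - D.card : ℕ) : ℝ) * α / (m : ℝ))).sup id

-- list lemma B
lemma list_le_count (l : List ℝ) (hl : l.Pairwise (· ≤ ·)) (t : ℝ) (r : ℕ) (h1 : 1 ≤ r)
    (h2 : r ≤ l.length) (h : l.getD (r-1) 0 < t) :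
    r ≤ (l.filter (fun x => decide (x < t))).length := by
  have hr1 : r - 1 < l.length := by omega
  rw [List.getD_eq_getElem l 0 hr1] at h
  have htake : (l.take r).filter (fun x => decide (x < t)) = l.take r := by
    apply List.filter_eq_self.mpr
    intro a ha
    rw [List.mem_take_iff_getElem] at ha
    obtain ⟨i, hi, rfl⟩ := ha
    have hil : i < l.length := lt_of_lt_of_le hi (min_le_right _ _)
    have hir : i ≤ r - 1 := by
      have : i < r := lt_of_lt_of_le hi (min_le_left _ _); omega
    have : l[i] ≤ l[r-1] := hl.rel_get_of_le (by simpa using hir)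
    simp only [decide_eq_true_eq, List.getElem_take]
    exact lt_of_le_of_lt this h
  calc r = (l.take r).length := by rw [List.length_take]; omega
    _ = ((l.take r).filter (fun x => decide (x < t))).length := by rw [htake]
    _ ≤ (l.filter (fun x => decide (x < t))).length :=
        List.Sublist.length_le (List.Sublist.filter _ (List.take_sublist r l))

-- list lemma A
lemma list_getD_count_lt (l : List ℝ) (hl : l.Pairwise (· ≤ ·)) (t : ℝ)
    (h1 : 1 ≤ (l.filter (fun x => decide (x < t))).length) :
    l.getD ((l.filter (fun x => decide (x < t))).length - 1) 0 < t := by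
  set k := (l.filter (fun x => decide (x < t))).length with hk
  have hkle : k ≤ l.length := List.length_filter_le _ _
  have hkl : k - 1 < l.length := by omega
  rw [List.getD_eq_getElem l 0 hkl]
  by_contra hcon
  push_neg at hcon
  have hdrop : (l.drop (k-1)).filter (fun x => decide (x < t)) = [] := by
    rw [List.filter_eq_nil_iff]
    intro a ha
    rw [List.mem_iff_getElem] at ha
    obtain ⟨i, hi, rfl⟩ := ha
    simp only [decide_eq_true_eq, not_lt]
    have hlen : (k-1) + i < l.length := by
      rw [List.length_drop] at hi; omega
    have heq : (l.drop (k-1))[i] = l[(k-1)+i] := by simp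
    rw [heq]
    exact le_trans hcon (hl.rel_get_of_le (by simp))
  have hsplit : l.filter (fun x => decide (x < t)) =
      (l.take (k-1)).filter (fun x => decide (x < t)) ++
      (l.drop (k-1)).filter (fun x => decide (x < t)) := by
    rw [← List.filter_append, List.take_append_drop]
  have : k ≤ k - 1 := by
    conv_lhs => rw [hk, hsplit]
    rw [List.length_append, hdrop]
    simp only [List.length_nil, add_zero]
    calc ((l.take (k-1)).filter (fun x => decide (x < t))).length
        ≤ (l.take (k-1)).length := List.length_filter_le _ _
      _ ≤ k - 1 := by rw [List.length_take]; omega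
  omega

lemma countBelow_eq_list (D : Multiset ℝ) (t : ℝ) :
    countBelow D t = ((D.sort (· ≤ ·)).filter (fun x => decide (x < t))).length := by
  unfold countBelow
  conv_lhs => rw [← Multiset.sort_eq D (· ≤ ·)]
  rfl

lemma le_countBelow (D : Multiset ℝ) (t : ℝ) (r : ℕ) (h1 : 1 ≤ r) (h2 : r ≤ D.card)
    (h : orderStat D r < t) : r ≤ countBelow D t := by
  rw [countBelow_eq_list]
  exact list_le_count _ (Multiset.pairwise_sort _ _) t r h1
    (by rwa [Multiset.length_sort]) h

lemma orderStat_countBelow_lt (D : Multiset ℝ) (t : ℝ) (h : 1 ≤ countBelow D t) :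
    orderStat D (countBelow D t) < t := by
  rw [countBelow_eq_list] at h ⊢
  exact list_getD_count_lt _ (Multiset.pairwise_sort _ _) t h

lemma filter_finsum {ι : Type*} (s : Finset ι) (f : ι → Multiset ℝ) (p : ℝ → Prop)
    [DecidablePred p] :
    (∑ i ∈ s, f i).filter p = ∑ i ∈ s, (f i).filter p := by
  induction s using Finset.induction with
  | empty => simp
  | insert _ _ h ih => rw [Finset.sum_insert h, Finset.sum_insert h, Multiset.filter_add, ih]

/-- Every globally BH-rejected p-value is selected by its chunk: every
`p ∈ Ch i` with `p < r_C·α/m` also satisfies `p < (r*_{C_i} + m − m_i)·α/m`; hence the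
global BH rejection set is contained in the union over chunks of the chunk-selected sets. -/
theorem global_rejections_selected_by_chunks
    (α : ℝ) (hα0 : 0 < α) (hα1 : α < 1)
    (c : ℕ) (Ch : Fin c → Multiset ℝ)
    (hvals : ∀ i, ∀ p ∈ Ch i, 0 ≤ p ∧ p ≤ 1)
    (C : Multiset ℝ) (hC : C = ∑ i, Ch i)
    (m : ℕ) (hm : m = C.card) :
    (∀ i : Fin c, ∀ p ∈ Ch i,
        p < (rBH α C : ℝ) * α / (m : ℝ) →
        p < ((rStarChunk α m (Ch i) + m - (Ch i).card : ℕ) : ℝ) * α / (m : ℝ)) ∧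
    C.filter (fun p => p < (rBH α C : ℝ) * α / (m : ℝ)) ≤
      ∑ i : Fin c, (Ch i).filter
        (fun p => p < ((rStarChunk α m (Ch i) + m - (Ch i).card : ℕ) : ℝ) * α / (m : ℝ)) := by
  have hmain : ∀ i : Fin c, ∀ p ∈ Ch i,
      p < (rBH α C : ℝ) * α / (m : ℝ) →
      p < ((rStarChunk α m (Ch i) + m - (Ch i).card : ℕ) : ℝ) * α / (m : ℝ) := by
    intro i p hp hpt
    have hp0 : 0 ≤ p := (hvals i p hp).1
    set r := rBH α C with hr
    set t := (r : ℝ) * α / (m : ℝ) with ht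
    -- m bounds
    have hChle : Ch i ≤ C := by
      rw [hC]
      exact Finset.single_le_sum (f := Ch) (fun j _ => Multiset.zero_le _) (Finset.mem_univ i)
    have hci_le : (Ch i).card ≤ m := by rw [hm]; exact Multiset.card_le_card hChle
    have hm0 : 0 < m := by
      have : 0 < (Ch i).card := Multiset.card_pos_iff_exists_mem.mpr ⟨p, hp⟩
      omega
    -- r ≥ 1
    have hr1 : 1 ≤ r := by
      by_contra hcon
      have : r = 0 := by omega
      rw [ht, this] at hpt
      simp at hpt
      exact absurd (lt_of_le_of_lt hp0 hpt) (lt_irrefl 0)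
    -- r is a member of the BH feasible set
    have hSne : ((Finset.Icc 1 C.card).filter
        (fun i => orderStat C i < (i : ℝ) * α / (C.card : ℝ))).Nonempty := by
      by_contra hcon
      rw [Finset.not_nonempty_iff_eq_empty] at hcon
      have : r = 0 := by rw [hr, rBH, hcon]; simp
      omega
    obtain ⟨b, hbmem, hbeq⟩ := Finset.exists_mem_eq_sup _ hSne id
    have hrb : r = b := by rw [hr, rBH, hbeq]; rfl
    rw [← hrb] at hbmem
    rw [Finset.mem_filter, Finset.mem_Icc] at hbmem
    obtain ⟨⟨_, hrm⟩, hros⟩ := hbmem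
    rw [← hm] at hrm hros
    -- r ≤ countBelow C t
    have hrcount : r ≤ countBelow C t :=
      le_countBelow C t r hr1 (by rw [← hm]; exact hrm) hros
    -- k := countBelow (Ch i) t
    set k := countBelow (Ch i) t with hk
    have hk1 : 1 ≤ k := by
      rw [hk, countBelow]
      exact Multiset.card_pos_iff_exists_mem.mpr ⟨p, Multiset.mem_filter.mpr ⟨hp, hpt⟩⟩
    have hk2 : k ≤ (Ch i).card := Multiset.card_le_card (Multiset.filter_le _ _)
    -- counting decomposition
    have hcount_sum : countBelow C t = ∑ j, countBelow (Ch j) t := by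
      rw [countBelow, hC, filter_finsum]
      simp [countBelow]
    have hcard_sum : m = ∑ j, (Ch j).card := by
      rw [hm, hC]
      simp
    have hkey : r + (Ch i).card ≤ k + m := by
      have e1 : ∑ j, countBelow (Ch j) t =
          k + ∑ j ∈ Finset.univ.erase i, countBelow (Ch j) t := by
        rw [hk, ← Finset.add_sum_erase _ _ (Finset.mem_univ i)]
      have e2 : ∑ j, (Ch j).card =
          (Ch i).card + ∑ j ∈ Finset.univ.erase i, (Ch j).card := by
        rw [← Finset.add_sum_erase _ _ (Finset.mem_univ i)]
      have e3 : ∑ j ∈ Finset.univ.erase i, countBelow (Ch j) t ≤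
          ∑ j ∈ Finset.univ.erase i, (Ch j).card :=
        Finset.sum_le_sum (fun j _ => Multiset.card_le_card (Multiset.filter_le _ _))
      calc r + (Ch i).card ≤ countBelow C t + (Ch i).card := by omega
        _ = k + (∑ j ∈ Finset.univ.erase i, countBelow (Ch j) t + (Ch i).card) := by
            rw [hcount_sum, e1]; ring
        _ ≤ k + (∑ j ∈ Finset.univ.erase i, (Ch j).card + (Ch i).card) := by omega
        _ = k + m := by rw [hcard_sum, e2]; ring
    have hrk : r ≤ k + m - (Ch i).card := by omega
    -- k is in the chunk feasible set
    have hOS : orderStat (Ch i) k < t := orderStat_countBelow_lt (Ch i) t hk1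
    have hαm : 0 ≤ α / (m : ℝ) := div_nonneg hα0.le (Nat.cast_nonneg m)
    have hcastle : ∀ a b : ℕ, a ≤ b → (a : ℝ) * α / (m : ℝ) ≤ (b : ℝ) * α / (m : ℝ) := by
      intro a b hab
      rw [mul_div_assoc, mul_div_assoc]
      exact mul_le_mul_of_nonneg_right (Nat.cast_le.mpr hab) hαm
    have hOS2 : orderStat (Ch i) k < ((k + m - (Ch i).card : ℕ) : ℝ) * α / (m : ℝ) :=
      lt_of_lt_of_le hOS (hcastle r _ hrk)
    have hkmem : k ∈ (Finset.Icc 1 (Ch i).card).filter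
        (fun s => orderStat (Ch i) s < ((s + m - (Ch i).card : ℕ) : ℝ) * α / (m : ℝ)) := by
      rw [Finset.mem_filter, Finset.mem_Icc]
      exact ⟨⟨hk1, hk2⟩, hOS2⟩
    have hkstar : k ≤ rStarChunk α m (Ch i) := Finset.le_sup (f := id) hkmem
    calc p < t := hpt
      _ ≤ ((k + m - (Ch i).card : ℕ) : ℝ) * α / (m : ℝ) := hcastle r _ hrk
      _ ≤ ((rStarChunk α m (Ch i) + m - (Ch i).card : ℕ) : ℝ) * α / (m : ℝ) :=
          hcastle _ _ (by omega)
  refine ⟨hmain, ?_⟩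
  set R := rBH α C with hR
  rw [hC, filter_finsum]
  apply Finset.sum_le_sum
  intro i _
  have heq : (Ch i).filter (fun p => p < (R : ℝ) * α / (m : ℝ)) =
      ((Ch i).filter (fun p => p < (R : ℝ) * α / (m : ℝ))).filter
        (fun p => p < ((rStarChunk α m (Ch i) + m - (Ch i).card : ℕ) : ℝ) * α / (m : ℝ)) := by
    symm
    rw [Multiset.filter_eq_self]
    intro a ha
    rw [Multiset.mem_filter] at ha
    exact hmain i a ha.1 ha.2
  rw [heq]
  exact Multiset.filter_le_filter _ (Multiset.filter_le _ _)
end
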